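/- arXiv:1905.06899 — 3 statements merged into one kernel-verified Lean document; each statement's English description precedes it below -/
import Mathlib

section
/- Let f be a nonnegative simple integrable function on a charge space (Ω, F, μ), written f = Σ_{k=1}^N α_k 1_{E_k} with α_k > 0 and a decreasing chain E_N ⊆ E_{N-1} ⊆ ... ⊆ E_1 of sets in F of finite charge. Then ∫_Ω f dμ = ∫_0^∞ μ_f(t) dt, where μ_f(t) = μ*({ω : f(ω) > t}) is the distribution function of f and the right-hand integral is a Lebesgue integral on (0,∞). -/
open Set ENNReal MeasureTheory

def IsSetField {Ω : Type*} (𝓕 : Set (Set Ω)) : Prop :=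
  Set.univ ∈ 𝓕 ∧ (∀ A B : Set Ω, A ∈ 𝓕 → B ∈ 𝓕 → A ∪ B ∈ 𝓕) ∧
    (∀ A B : Set Ω, A ∈ 𝓕 → B ∈ 𝓕 → A \ B ∈ 𝓕)

def IsCharge {Ω : Type*} (𝓕 : Set (Set Ω)) (μ : Set Ω → ℝ≥0∞) : Prop :=
  μ ∅ = 0 ∧ ∀ A B : Set Ω, A ∈ 𝓕 → B ∈ 𝓕 → Disjoint A B → μ (A ∪ B) = μ A + μ B

noncomputable def outerCharge {Ω : Type*} (𝓕 : Set (Set Ω)) (μ : Set Ω → ℝ≥0∞)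
    (E : Set Ω) : ℝ≥0∞ :=
  ⨅ (F : Set Ω) (_ : F ∈ 𝓕) (_ : E ⊆ F), μ F

/-- For a nonnegative simple integrable function `f = ∑ α_k 1_{E_k}` with `α_k > 0`
and a decreasing chain of sets `E_k` of finite charge in the field,
`∫_Ω f dμ = ∫_0^∞ μ_f(t) dt` where `μ_f(t) = μ*({f > t})`. -/
theorem integral_eq_lintegral_distribution {Ω : Type*} (𝓕 : Set (Set Ω))
    (μ : Set Ω → ℝ≥0∞) (hF : IsSetField 𝓕) (hμ : IsCharge 𝓕 μ)
    (N : ℕ) (α : Fin N → ℝ) (E : Fin N → Set Ω)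
    (hα : ∀ k, 0 < α k)
    (hE : ∀ k, E k ∈ 𝓕) (hEfin : ∀ k, μ (E k) ≠ ∞)
    (hchain : ∀ k l : Fin N, k ≤ l → E l ⊆ E k)
    (f : Ω → ℝ) (hf : f = fun ω => ∑ k, α k * (E k).indicator (fun _ => (1:ℝ)) ω) :
    ∑ k, ENNReal.ofReal (α k) * μ (E k)
      = ∫⁻ t in Set.Ioi (0:ℝ), outerCharge 𝓕 μ {ω | t < f ω} := by
  classical
  -- outer charge of a field set is its charge
  have houter : ∀ A ∈ 𝓕, outerCharge 𝓕 μ A = μ A := by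
    intro A hA
    apply le_antisymm
    · exact iInf_le_of_le A (iInf_le_of_le hA (iInf_le_of_le (subset_refl A) le_rfl))
    · refine le_iInf fun F => le_iInf fun hFm => le_iInf fun hAF => ?_
      have h1 : A ∪ (F \ A) = F := Set.union_diff_cancel hAF
      have h2 := hμ.2 A (F \ A) hA (hF.2.2 F A hFm hA) Set.disjoint_sdiff_right
      rw [h1] at h2
      rw [h2]; exact le_self_add
  have hempty : (∅ : Set Ω) ∈ 𝓕 := by
    have := hF.2.2 Set.univ Set.univ hF.1 hF.1
    simpa using this
  have houter_empty : outerCharge 𝓕 μ (∅ : Set Ω) = 0 := by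
    rw [houter ∅ hempty, hμ.1]
  -- partial sums
  set T : ℕ → ℝ := fun j => ∑ k ∈ Finset.univ.filter (fun k : Fin N => (k : ℕ) < j), α k
    with hTdef
  have hT0 : T 0 = 0 := by simp [hTdef]
  have hTmono : Monotone T := by
    intro i j hij
    refine Finset.sum_le_sum_of_subset_of_nonneg ?_ (fun k _ _ => (hα k).le)
    intro k hk
    simp only [Finset.mem_filter, Finset.mem_univ, true_and] at hk ⊢
    exact lt_of_lt_of_le hk hij
  have hTstep : ∀ j (hj : j < N), T (j + 1) = T j + α ⟨j, hj⟩ := by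
    intro j hj
    have hins : Finset.univ.filter (fun k : Fin N => (k : ℕ) < j + 1)
        = insert ⟨j, hj⟩ (Finset.univ.filter (fun k : Fin N => (k : ℕ) < j)) := by
      ext k
      simp only [Finset.mem_filter, Finset.mem_univ, true_and, Finset.mem_insert,
        Nat.lt_succ_iff_lt_or_eq, Fin.ext_iff]
      tauto
    rw [hTdef]
    simp only
    rw [hins, Finset.sum_insert (by simp)]
    ring
  have hTnonneg : ∀ j, 0 ≤ T j := fun j => hT0 ▸ hTmono (Nat.zero_le j)
  -- counting function
  set c : Ω → ℕ := fun ω => (Finset.univ.filter (fun k : Fin N => ω ∈ E k)).card with hcdef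
  have hc_le : ∀ ω, c ω ≤ N := by
    intro ω
    calc c ω ≤ Finset.univ.card := Finset.card_filter_le _ _
    _ = N := by simp
  have hmem : ∀ (ω : Ω) (k : Fin N), ω ∈ E k ↔ (k : ℕ) < c ω := by
    intro ω k
    constructor
    · intro hk
      have hsub : Finset.Iic k ⊆ Finset.univ.filter (fun l : Fin N => ω ∈ E l) := by
        intro l hl
        simp only [Finset.mem_Iic] at hl
        simp only [Finset.mem_filter, Finset.mem_univ, true_and]
        exact hchain l k hl hk
      have hcard : (k : ℕ) + 1 ≤ c ω := by
        rw [hcdef]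
        simpa [Fin.card_Iic] using Finset.card_le_card hsub
      omega
    · intro hk
      by_contra hnk
      have hsub : Finset.univ.filter (fun l : Fin N => ω ∈ E l) ⊆ Finset.Iio k := by
        intro l hl
        simp only [Finset.mem_filter, Finset.mem_univ, true_and] at hl
        simp only [Finset.mem_Iio]
        by_contra hlk
        exact hnk (hchain k l (le_of_not_gt hlk) hl)
      have hcard : c ω ≤ (k : ℕ) := by
        rw [hcdef]
        simpa [Fin.card_Iio] using Finset.card_le_card hsub
      omega
  have hfeq : ∀ ω, f ω = T (c ω) := by
    intro ω
    rw [hf]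
    simp only
    rw [hTdef]
    simp only
    rw [Finset.sum_filter]
    apply Finset.sum_congr rfl
    intro k _
    by_cases hk : ω ∈ E k
    · rw [if_pos ((hmem ω k).mp hk), Set.indicator_of_mem hk]; ring
    · rw [if_neg (fun h => hk ((hmem ω k).mpr h)), Set.indicator_of_notMem hk, mul_zero]
  -- the pointwise identity on (0, ∞)
  have hpt : ∀ t : ℝ, t ∈ Set.Ioi (0:ℝ) →
      outerCharge 𝓕 μ {ω | t < f ω}
        = ∑ k : Fin N, (Set.Ico (T k) (T (k + 1))).indicator (fun _ => μ (E k)) t := by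
    intro t ht
    simp only [Set.mem_Ioi] at ht
    by_cases htN : t < T N
    · -- find the unique level j
      have hex : ∃ j, t < T (j + 1) := by
        rcases Nat.exists_eq_succ_of_ne_zero (n := N) (by
          rintro rfl; rw [hT0] at htN; linarith) with ⟨m, rfl⟩
        exact ⟨m, htN⟩
      set j := Nat.find hex with hjdef
      have hjlt : t < T (j + 1) := Nat.find_spec hex
      have hjle : T j ≤ t := by
        rcases Nat.eq_zero_or_pos j with h0 | h0
        · rw [h0, hT0]; linarith
        · have hmin := Nat.find_min hex (m := j - 1) (by omega)
          push_neg at hmin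
          rwa [Nat.sub_add_cancel h0] at hmin
      have hjN : j < N := by
        by_contra hge
        push_neg at hge
        exact absurd (le_trans (hTmono hge) hjle) (not_le.mpr htN)
      -- the superlevel set is E ⟨j, hjN⟩
      have hset : {ω | t < f ω} = E ⟨j, hjN⟩ := by
        ext ω
        simp only [Set.mem_setOf_eq, hfeq ω, hmem ω ⟨j, hjN⟩]
        constructor
        · intro h
          by_contra hc'
          push_neg at hc'
          exact absurd (lt_of_lt_of_le h (hTmono hc')) (not_lt.mpr hjle)
        · intro h
          exact lt_of_lt_of_le hjlt (hTmono h)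
      rw [hset, houter _ (hE _)]
      rw [Finset.sum_eq_single (⟨j, hjN⟩ : Fin N)]
      · rw [Set.indicator_of_mem (Set.mem_Ico.mpr ⟨hjle, hjlt⟩)]
      · intro k _ hk
        apply Set.indicator_of_notMem
        rw [Set.mem_Ico]
        rintro ⟨h1, h2⟩
        have hne : (k : ℕ) ≠ j := fun h => hk (Fin.ext h)
        rcases hne.lt_or_gt with hlt | hgt
        · have hle2 : T ((k : ℕ) + 1) ≤ T j := hTmono hlt
          linarith
        · have hle2 : T (j + 1) ≤ T (k : ℕ) := hTmono hgt
          linarith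
      · intro h; exact absurd (Finset.mem_univ _) h
    · -- t ≥ T N : everything vanishes
      push_neg at htN
      have hset : {ω | t < f ω} = (∅ : Set Ω) := by
        ext ω
        simp only [Set.mem_setOf_eq, Set.mem_empty_iff_false, iff_false, not_lt, hfeq ω]
        exact le_trans (hTmono (hc_le ω)) htN
      rw [hset, houter_empty]
      symm
      apply Finset.sum_eq_zero
      intro k _
      apply Set.indicator_of_notMem
      rw [Set.mem_Ico]
      rintro ⟨_, h2⟩
      have hle2 : T ((k : ℕ) + 1) ≤ t := le_trans (hTmono (Nat.succ_le_of_lt k.2)) htN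
      linarith
  rw [setLIntegral_congr_fun measurableSet_Ioi hpt]
  rw [lintegral_finset_sum _ (fun k _ =>
    (measurable_const.indicator measurableSet_Ico))]
  apply Finset.sum_congr rfl
  intro k _
  rw [lintegral_indicator_const measurableSet_Ico,
    Measure.restrict_apply measurableSet_Ico]
  have hvol : volume (Set.Ico (T k) (T (k + 1)) ∩ Set.Ioi (0:ℝ))
      = ENNReal.ofReal (α k) := by
    have hstep := hTstep k k.2
    have heq : T (↑k + 1) - T ↑k = α k := by
      rw [hstep]; simp
    apply le_antisymm
    · calc volume (Set.Ico (T k) (T (k + 1)) ∩ Set.Ioi (0:ℝ))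
          ≤ volume (Set.Ico (T k) (T (k + 1))) := measure_mono Set.inter_subset_left
      _ = ENNReal.ofReal (α k) := by rw [Real.volume_Ico, heq]
    · calc ENNReal.ofReal (α k) = volume (Set.Ioo (T k) (T (k + 1))) := by
            rw [Real.volume_Ioo, heq]
      _ ≤ volume (Set.Ico (T k) (T (k + 1)) ∩ Set.Ioi (0:ℝ)) := by
            apply measure_mono
            rintro x ⟨h1, h2⟩
            exact ⟨⟨h1.le, h2⟩, lt_of_le_of_lt (hTnonneg _) h1⟩
  rw [hvol, mul_comm]
end

section
/- Let f, g be nonnegative simple integrable functions on a charge space (Ω, F, μ). Then ∫_Ω |f − g| dμ = ∫_0^∞ |μ_{f∨g}(t) − μ_{f∧g}(t)| dt, where f∨g = max(f,g), f∧g = min(f,g), and μ_h(t) = μ*({h > t}). -/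
open Set ENNReal MeasureTheory

/-- `f` is a simple integrable function: finitely many values, each nonzero value
taken on a set of the field of finite charge. -/
def IsSimpleInt {Ω : Type*} (𝓕 : Set (Set Ω)) (μ : Set Ω → ℝ≥0∞) (f : Ω → ℝ) : Prop :=
  (Set.range f).Finite ∧ ∀ c : ℝ, c ≠ 0 → {ω | f ω = c} ∈ 𝓕 ∧ μ {ω | f ω = c} ≠ ∞

/-- The charge integral of a nonnegative simple function,
`∫ f dμ = ∑_c c · μ({f = c})`. -/
noncomputable def chargeIntegral {Ω : Type*} (μ : Set Ω → ℝ≥0∞) (f : Ω → ℝ) : ℝ≥0∞ :=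
  ∑' c : ℝ, ENNReal.ofReal c * μ {ω | f ω = c}

/-- The absolute difference in `ℝ≥0∞`. -/
noncomputable def absd (a b : ℝ≥0∞) : ℝ≥0∞ := (a - b) ⊔ (b - a)

section helpers
variable {Ω : Type*} {𝓕 : Set (Set Ω)} {μ : Set Ω → ℝ≥0∞}

lemma my_empty_mem (hF : IsSetField 𝓕) : (∅ : Set Ω) ∈ 𝓕 := by
  simpa using hF.2.2 _ _ hF.1 hF.1

lemma my_inter_mem (hF : IsSetField 𝓕) {A B : Set Ω} (hA : A ∈ 𝓕) (hB : B ∈ 𝓕) :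
    A ∩ B ∈ 𝓕 := by
  have h := hF.2.2 A (A \ B) hA (hF.2.2 A B hA hB)
  simpa [Set.diff_diff_right_self] using h

lemma my_biUnion_mem (hF : IsSetField 𝓕) {ι : Type*} {E : ι → Set Ω} (s : Finset ι)
    (h : ∀ i ∈ s, E i ∈ 𝓕) : (⋃ i ∈ s, E i) ∈ 𝓕 := by
  classical
  induction s using Finset.induction_on with
  | empty => simpa using my_empty_mem hF
  | insert a s hx ih =>
      rw [Finset.set_biUnion_insert]
      exact hF.2.1 _ _ (h a (Finset.mem_insert_self a s))
        (ih fun i hi => h i (Finset.mem_insert_of_mem hi))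

lemma my_charge_mono (hF : IsSetField 𝓕) (hμ : IsCharge 𝓕 μ) {A B : Set Ω}
    (hA : A ∈ 𝓕) (hB : B ∈ 𝓕) (hAB : A ⊆ B) : μ A ≤ μ B := by
  have h : μ B = μ A + μ (B \ A) := by
    rw [← hμ.2 A (B \ A) hA (hF.2.2 B A hB hA) disjoint_sdiff_right, Set.union_diff_cancel hAB]
  rw [h]; exact le_self_add

lemma my_outerCharge_eq (hF : IsSetField 𝓕) (hμ : IsCharge 𝓕 μ) {E : Set Ω} (hE : E ∈ 𝓕) :
    outerCharge 𝓕 μ E = μ E := by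
  apply le_antisymm
  · exact iInf_le_of_le E (iInf_le_of_le hE (iInf_le_of_le subset_rfl le_rfl))
  · exact le_iInf fun F => le_iInf fun hFm => le_iInf fun hsub => my_charge_mono hF hμ hE hFm hsub

lemma my_charge_biUnion (hF : IsSetField 𝓕) (hμ : IsCharge 𝓕 μ) {ι : Type*} {E : ι → Set Ω}
    (s : Finset ι) (hmem : ∀ i ∈ s, E i ∈ 𝓕)
    (hdisj : ∀ i ∈ s, ∀ j ∈ s, i ≠ j → Disjoint (E i) (E j)) :
    μ (⋃ i ∈ s, E i) = ∑ i ∈ s, μ (E i) := by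
  classical
  induction s using Finset.induction_on with
  | empty => simpa using hμ.1
  | insert a s hx ih =>
      rw [Finset.set_biUnion_insert, Finset.sum_insert hx]
      rw [hμ.2 _ _ (hmem a (Finset.mem_insert_self a s))
        (my_biUnion_mem hF s fun i hi => hmem i (Finset.mem_insert_of_mem hi))
        (Set.disjoint_iUnion₂_right.mpr fun i hi =>
          hdisj a (Finset.mem_insert_self a s) i (Finset.mem_insert_of_mem hi)
            (fun h => hx (h ▸ hi)))]
      rw [ih (fun i hi => hmem i (Finset.mem_insert_of_mem hi))
        (fun i hi j hj hij => hdisj i (Finset.mem_insert_of_mem hi) j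
          (Finset.mem_insert_of_mem hj) hij)]

def pairSet {Ω : Type*} (f g : Ω → ℝ) (p : ℝ × ℝ) : Set Ω := {ω | f ω = p.1 ∧ g ω = p.2}

variable {f g : Ω → ℝ}

lemma my_levelSet_mem (hF : IsSetField 𝓕) (hf : IsSimpleInt 𝓕 μ f) (a : ℝ) :
    {ω | f ω = a} ∈ 𝓕 := by
  classical
  rcases eq_or_ne a 0 with rfl | ha
  · have hset : {ω | f ω = 0}
        = Set.univ \ ⋃ c ∈ hf.1.toFinset.erase 0, {ω | f ω = c} := by
      ext ω
      simp only [Set.mem_setOf_eq, Set.mem_diff, Set.mem_univ, true_and, Set.mem_iUnion,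
        Finset.mem_erase, Set.Finite.mem_toFinset, not_exists]
      constructor
      · rintro h0 c ⟨hc0, _⟩ hc; exact hc0 (hc.symm.trans h0)
      · intro h
        by_contra h0
        exact h (f ω) ⟨h0, Set.mem_range_self ω⟩ rfl
    rw [hset]
    exact hF.2.2 _ _ hF.1 (my_biUnion_mem hF _ fun c hc =>
      (hf.2 c (Finset.mem_erase.mp hc).1).1)
  · exact (hf.2 a ha).1

lemma my_pairSet_mem (hF : IsSetField 𝓕) (hf : IsSimpleInt 𝓕 μ f) (hg : IsSimpleInt 𝓕 μ g)
    (p : ℝ × ℝ) : pairSet f g p ∈ 𝓕 := by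
  have : pairSet f g p = {ω | f ω = p.1} ∩ {ω | g ω = p.2} := rfl
  rw [this]
  exact my_inter_mem hF (my_levelSet_mem hF hf p.1) (my_levelSet_mem hF hg p.2)

lemma my_pairSet_finite (hF : IsSetField 𝓕) (hμ : IsCharge 𝓕 μ) (hf : IsSimpleInt 𝓕 μ f)
    (hg : IsSimpleInt 𝓕 μ g) {p : ℝ × ℝ} (hp : p ≠ (0, 0)) : μ (pairSet f g p) ≠ ∞ := by
  rcases eq_or_ne p.1 0 with h1 | h1
  · have h2 : p.2 ≠ 0 := fun h2 => hp (Prod.ext h1 h2)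
    refine ne_top_of_le_ne_top (hg.2 p.2 h2).2 ?_
    exact my_charge_mono hF hμ (my_pairSet_mem hF hf hg p) (hg.2 p.2 h2).1 fun ω hω => hω.2
  · refine ne_top_of_le_ne_top (hf.2 p.1 h1).2 ?_
    exact my_charge_mono hF hμ (my_pairSet_mem hF hf hg p) (hf.2 p.1 h1).1 fun ω hω => hω.1

lemma my_pairSet_disjoint {p q : ℝ × ℝ} (hpq : p ≠ q) :
    Disjoint (pairSet f g p) (pairSet f g q) := by
  rw [Set.disjoint_left]
  rintro ω ⟨h1, h2⟩ ⟨h3, h4⟩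
  exact hpq (Prod.ext (h1 ▸ h3.symm ▸ rfl) (h2 ▸ h4.symm ▸ rfl))

lemma my_decomp (hf : IsSimpleInt 𝓕 μ f) (hg : IsSimpleInt 𝓕 μ g)
    (ψ : ℝ → ℝ → ℝ) (Q : ℝ → Prop) [DecidablePred Q] (hQ0 : ¬ Q (ψ 0 0))
    (P : Finset (ℝ × ℝ)) (hP : ∀ ω, (f ω, g ω) ≠ (0, 0) → (f ω, g ω) ∈ P) :
    {ω | Q (ψ (f ω) (g ω))} = ⋃ p ∈ P.filter (fun p => Q (ψ p.1 p.2)), pairSet f g p := by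
  ext ω
  simp only [Set.mem_setOf_eq, Set.mem_iUnion, Finset.mem_filter, exists_prop]
  constructor
  · intro hQ
    have hne : (f ω, g ω) ≠ (0, 0) := by
      intro h
      have h1 : f ω = 0 := congrArg Prod.fst h
      have h2 : g ω = 0 := congrArg Prod.snd h
      rw [h1, h2] at hQ
      exact hQ0 hQ
    exact ⟨(f ω, g ω), ⟨hP ω hne, hQ⟩, rfl, rfl⟩
  · rintro ⟨p, ⟨_, hQ⟩, h1, h2⟩
    rw [h1, h2]; exact hQ

lemma my_charge_decomp (hF : IsSetField 𝓕) (hμ : IsCharge 𝓕 μ)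
    (hf : IsSimpleInt 𝓕 μ f) (hg : IsSimpleInt 𝓕 μ g)
    (ψ : ℝ → ℝ → ℝ) (Q : ℝ → Prop) [DecidablePred Q] (hQ0 : ¬ Q (ψ 0 0))
    (P : Finset (ℝ × ℝ)) (hP : ∀ ω, (f ω, g ω) ≠ (0, 0) → (f ω, g ω) ∈ P) :
    μ {ω | Q (ψ (f ω) (g ω))}
      = ∑ p ∈ P.filter (fun p => Q (ψ p.1 p.2)), μ (pairSet f g p) := by
  rw [my_decomp hf hg ψ Q hQ0 P hP]
  exact my_charge_biUnion hF hμ _ (fun p _ => my_pairSet_mem hF hf hg p)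
    (fun p _ q _ hpq => my_pairSet_disjoint hpq)

lemma my_setOf_mem (hF : IsSetField 𝓕) (hμ : IsCharge 𝓕 μ)
    (hf : IsSimpleInt 𝓕 μ f) (hg : IsSimpleInt 𝓕 μ g)
    (ψ : ℝ → ℝ → ℝ) (Q : ℝ → Prop) [DecidablePred Q] (hQ0 : ¬ Q (ψ 0 0))
    (P : Finset (ℝ × ℝ)) (hP : ∀ ω, (f ω, g ω) ≠ (0, 0) → (f ω, g ω) ∈ P) :
    {ω | Q (ψ (f ω) (g ω))} ∈ 𝓕 := by
  rw [my_decomp hf hg ψ Q hQ0 P hP]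
  exact my_biUnion_mem hF _ fun p _ => my_pairSet_mem hF hf hg p

end helpers

section main
variable {Ω : Type*} {𝓕 : Set (Set Ω)} {μ : Set Ω → ℝ≥0∞} {f g : Ω → ℝ}

lemma my_chargeIntegral_eq (hF : IsSetField 𝓕) (hμ : IsCharge 𝓕 μ)
    (hf : IsSimpleInt 𝓕 μ f) (hg : IsSimpleInt 𝓕 μ g)
    (ψ : ℝ → ℝ → ℝ) (hψ : ψ 0 0 = 0)
    (P : Finset (ℝ × ℝ)) (hP : ∀ ω, (f ω, g ω) ≠ (0, 0) → (f ω, g ω) ∈ P) :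
    chargeIntegral μ (fun ω => ψ (f ω) (g ω))
      = ∑ p ∈ P, ENNReal.ofReal (ψ p.1 p.2) * μ (pairSet f g p) := by
  classical
  set C : Finset ℝ := insert 0 (P.image fun p => ψ p.1 p.2) with hC
  have hsupp : ∀ c ∉ C, ENNReal.ofReal c * μ {ω | ψ (f ω) (g ω) = c} = 0 := by
    intro c hc
    have hc0 : c ≠ 0 := by rintro rfl; exact hc (Finset.mem_insert_self _ _)
    have hcim : ∀ p ∈ P, ψ p.1 p.2 ≠ c := by
      intro p hp h; exact hc (Finset.mem_insert_of_mem (Finset.mem_image.mpr ⟨p, hp, h⟩))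
    have hemp : {ω | ψ (f ω) (g ω) = c} = ∅ := by
      ext ω; simp only [Set.mem_setOf_eq, Set.mem_empty_iff_false, iff_false]
      intro h
      have hne : (f ω, g ω) ≠ (0, 0) := by
        intro he
        have h1 : f ω = 0 := congrArg Prod.fst he
        have h2 : g ω = 0 := congrArg Prod.snd he
        rw [h1, h2, hψ] at h; exact hc0 h.symm
      exact hcim _ (hP ω hne) h
    rw [hemp, hμ.1, mul_zero]
  rw [chargeIntegral, tsum_eq_sum hsupp]
  have key : ∀ c ∈ C, ENNReal.ofReal c * μ {ω | ψ (f ω) (g ω) = c}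
      = ∑ p ∈ P.filter (fun p => ψ p.1 p.2 = c),
          ENNReal.ofReal (ψ p.1 p.2) * μ (pairSet f g p) := by
    intro c _
    rcases eq_or_ne c 0 with rfl | hc0
    · rw [ENNReal.ofReal_zero, zero_mul]
      refine (Finset.sum_eq_zero fun p hp => ?_).symm
      rw [(Finset.mem_filter.mp hp).2, ENNReal.ofReal_zero, zero_mul]
    · rw [my_charge_decomp hF hμ hf hg ψ (fun x => x = c)
        (by rw [hψ]; exact fun h => hc0 h.symm) P hP, Finset.mul_sum]
      refine Finset.sum_congr rfl fun p hp => ?_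
      rw [(Finset.mem_filter.mp hp).2]
  rw [Finset.sum_congr rfl key]
  exact Finset.sum_fiberwise_of_maps_to
    (fun p hp => Finset.mem_insert_of_mem (Finset.mem_image_of_mem _ hp)) _

lemma my_pointwise (hF : IsSetField 𝓕) (hμ : IsCharge 𝓕 μ)
    (hf : IsSimpleInt 𝓕 μ f) (hg : IsSimpleInt 𝓕 μ g)
    (ψ : ℝ → ℝ → ℝ) (hψ : ψ 0 0 = 0)
    (P : Finset (ℝ × ℝ)) (hP : ∀ ω, (f ω, g ω) ≠ (0, 0) → (f ω, g ω) ∈ P)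
    (t : ℝ) (ht : t ∈ Set.Ioi (0:ℝ)) :
    μ {ω | t < ψ (f ω) (g ω)}
      = ∑ p ∈ P, (Set.Ioo (0:ℝ) (ψ p.1 p.2)).indicator (fun _ => μ (pairSet f g p)) t := by
  classical
  rw [my_charge_decomp hF hμ hf hg ψ (fun x => t < x)
    (by rw [hψ]; exact not_lt.mpr (le_of_lt ht)) P hP, Finset.sum_filter]
  refine Finset.sum_congr rfl fun p _ => ?_
  rw [Set.indicator_apply]
  simp only [Set.mem_Ioo]
  exact (if_congr (and_iff_right (Set.mem_Ioi.mp ht)) rfl rfl).symm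

lemma my_lint_ind {ι : Type*} (P : Finset ι) (v : ι → ℝ) (k : ι → ℝ≥0∞) :
    ∫⁻ t in Set.Ioi (0:ℝ), ∑ p ∈ P, (Set.Ioo (0:ℝ) (v p)).indicator (fun _ => k p) t
      = ∑ p ∈ P, ENNReal.ofReal (v p) * k p := by
  rw [lintegral_finset_sum _ fun p _ => measurable_const.indicator measurableSet_Ioo]
  refine Finset.sum_congr rfl fun p _ => ?_
  rw [lintegral_indicator measurableSet_Ioo, Measure.restrict_restrict measurableSet_Ioo,
    Set.inter_eq_self_of_subset_left Set.Ioo_subset_Ioi_self, setLIntegral_const,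
    Real.volume_Ioo, sub_zero, mul_comm]

end main

/-- For nonnegative simple integrable `f, g`:
`∫_Ω |f − g| dμ = ∫_0^∞ |μ_{f∨g}(t) − μ_{f∧g}(t)| dt`. -/
theorem integral_abs_sub_eq {Ω : Type*} (𝓕 : Set (Set Ω)) (μ : Set Ω → ℝ≥0∞)
    (hF : IsSetField 𝓕) (hμ : IsCharge 𝓕 μ) (f g : Ω → ℝ)
    (hf : IsSimpleInt 𝓕 μ f) (hg : IsSimpleInt 𝓕 μ g)
    (hf0 : ∀ ω, 0 ≤ f ω) (hg0 : ∀ ω, 0 ≤ g ω) :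
    chargeIntegral μ (fun ω => |f ω - g ω|)
      = ∫⁻ t in Set.Ioi (0:ℝ),
          absd (outerCharge 𝓕 μ {ω | t < max (f ω) (g ω)})
               (outerCharge 𝓕 μ {ω | t < min (f ω) (g ω)}) := by

  classical
  set P : Finset (ℝ × ℝ) := (hf.1.toFinset ×ˢ hg.1.toFinset).erase (0, 0) with hPdef
  have hP : ∀ ω, (f ω, g ω) ≠ (0, 0) → (f ω, g ω) ∈ P := by
    intro ω hne
    exact Finset.mem_erase.mpr ⟨hne, Finset.mem_product.mpr
      ⟨hf.1.mem_toFinset.mpr (Set.mem_range_self ω), hg.1.mem_toFinset.mpr (Set.mem_range_self ω)⟩⟩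
  have hP0 : ∀ p ∈ P, p ≠ (0, 0) := fun p hp => (Finset.mem_erase.mp hp).1
  have hPnn : ∀ p ∈ P, 0 ≤ p.1 ∧ 0 ≤ p.2 := by
    intro p hp
    have h := Finset.mem_product.mp (Finset.mem_erase.mp hp).2
    obtain ⟨ω1, hω1⟩ := hf.1.mem_toFinset.mp h.1
    obtain ⟨ω2, hω2⟩ := hg.1.mem_toFinset.mp h.2
    exact ⟨hω1 ▸ hf0 ω1, hω2 ▸ hg0 ω2⟩
  set Fi : ℝ → ℝ≥0∞ := fun t =>
    ∑ p ∈ P, (Set.Ioo (0:ℝ) (max p.1 p.2)).indicator (fun _ => μ (pairSet f g p)) t with hFi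
  set Gi : ℝ → ℝ≥0∞ := fun t =>
    ∑ p ∈ P, (Set.Ioo (0:ℝ) (min p.1 p.2)).indicator (fun _ => μ (pairSet f g p)) t with hGi
  have hle : ∀ t, Gi t ≤ Fi t := by
    intro t
    refine Finset.sum_le_sum fun p _ => ?_
    exact Set.indicator_le_indicator_of_subset
      (Set.Ioo_subset_Ioo_right (min_le_max)) (fun _ => zero_le) t
  have hcong : ∀ t ∈ Set.Ioi (0:ℝ),
      absd (outerCharge 𝓕 μ {ω | t < max (f ω) (g ω)})
           (outerCharge 𝓕 μ {ω | t < min (f ω) (g ω)}) = Fi t - Gi t := by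
    intro t ht
    have htm := Set.mem_Ioi.mp ht
    have hQmax : ¬ ((fun x => t < x) ((fun a b => max a b) (0:ℝ) 0)) := by
      simpa using not_lt.mpr htm.le
    have hQmin : ¬ ((fun x => t < x) ((fun a b => min a b) (0:ℝ) 0)) := by
      simpa using not_lt.mpr htm.le
    have h1 : outerCharge 𝓕 μ {ω | t < max (f ω) (g ω)} = μ {ω | t < max (f ω) (g ω)} :=
      my_outerCharge_eq hF hμ
        (my_setOf_mem hF hμ hf hg (fun a b => max a b) (fun x => t < x) hQmax P hP)
    have h2 : outerCharge 𝓕 μ {ω | t < min (f ω) (g ω)} = μ {ω | t < min (f ω) (g ω)} :=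
      my_outerCharge_eq hF hμ
        (my_setOf_mem hF hμ hf hg (fun a b => min a b) (fun x => t < x) hQmin P hP)
    have h3 : μ {ω | t < max (f ω) (g ω)} = Fi t :=
      my_pointwise hF hμ hf hg (fun a b => max a b) (by simp) P hP t ht
    have h4 : μ {ω | t < min (f ω) (g ω)} = Gi t :=
      my_pointwise hF hμ hf hg (fun a b => min a b) (by simp) P hP t ht
    rw [h1, h2, h3, h4, absd, tsub_eq_zero_of_le (hle t), sup_eq_left.mpr zero_le]
  rw [setLIntegral_congr_fun measurableSet_Ioi hcong]
  have hmeasG : Measurable Gi :=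
    Finset.measurable_sum _ fun p _ => measurable_const.indicator measurableSet_Ioo
  have hGint : ∫⁻ t in Set.Ioi (0:ℝ), Gi t
      = ∑ p ∈ P, ENNReal.ofReal (min p.1 p.2) * μ (pairSet f g p) :=
    my_lint_ind P (fun p => min p.1 p.2) (fun p => μ (pairSet f g p))
  have hFint : ∫⁻ t in Set.Ioi (0:ℝ), Fi t
      = ∑ p ∈ P, ENNReal.ofReal (max p.1 p.2) * μ (pairSet f g p) :=
    my_lint_ind P (fun p => max p.1 p.2) (fun p => μ (pairSet f g p))
  have hGfin : (∑ p ∈ P, ENNReal.ofReal (min p.1 p.2) * μ (pairSet f g p)) ≠ ∞ := by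
    refine (ENNReal.sum_lt_top.mpr fun p hp => ?_).ne
    exact ENNReal.mul_lt_top ENNReal.ofReal_lt_top
      (my_pairSet_finite hF hμ hf hg (hP0 p hp)).lt_top
  rw [lintegral_sub hmeasG (by rw [hGint]; exact hGfin) (Filter.Eventually.of_forall hle)]
  rw [hFint, hGint]
  rw [my_chargeIntegral_eq hF hμ hf hg (fun a b => |a - b|) (by simp) P hP]
  refine ENNReal.eq_sub_of_add_eq hGfin ?_
  rw [← Finset.sum_add_distrib]
  refine Finset.sum_congr rfl fun p hp => ?_
  rw [← add_mul, ← ENNReal.ofReal_add (abs_nonneg _) (le_min (hPnn p hp).1 (hPnn p hp).2)]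
  congr 2
  rcases le_total p.1 p.2 with h | h
  · rw [abs_of_nonpos (by linarith), min_eq_left h, max_eq_right h]; ring
  · rw [abs_of_nonneg (by linarith), min_eq_right h, max_eq_left h]; ring
end

section
/- Let E ⊆ ℝ be a Lebesgue measurable set that is q-periodic (i.e., E + q = E) for some q > 0. Then for every a ∈ ℝ, lim_{t→∞} λ(E ∩ [−t,t])/(2t) exists and equals λ(E ∩ [a, a+q])/q. -/
set_option linter.unusedSectionVars false
open MeasureTheory Filter Set Topology ENNReal

section Aux
variable (E : Set ℝ) (hE : MeasurableSet E) (q : ℝ) (hq : 0 < q)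
  (hper : ∀ x : ℝ, x ∈ E ↔ x + q ∈ E)
include hE hq hper

lemma shift1 (x : ℝ) :
    volume (E ∩ Set.Ico (x + q) (x + q + q)) = volume (E ∩ Set.Ico x (x + q)) := by
  have hpre : (fun y : ℝ => y + q) ⁻¹' (E ∩ Set.Ico (x + q) (x + q + q))
      = E ∩ Set.Ico x (x + q) := by
    ext y
    simp only [Set.mem_preimage, Set.mem_inter_iff, Set.mem_Ico]
    constructor
    · rintro ⟨hy, h1, h2⟩
      exact ⟨(hper y).2 hy, by linarith, by linarith⟩
    · rintro ⟨hy, h1, h2⟩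
      exact ⟨(hper y).1 hy, by linarith, by linarith⟩
  rw [← hpre, measure_preimage_add_right]

lemma shiftZ (x : ℝ) : ∀ n : ℤ,
    volume (E ∩ Set.Ico (x + n * q) (x + n * q + q)) = volume (E ∩ Set.Ico x (x + q)) := by
  intro n
  induction n using Int.induction_on with
  | zero => simp
  | succ k ih =>
      have h : x + ((k : ℤ) + 1 : ℤ) * q = (x + (k : ℤ) * q) + q := by push_cast; ring
      rw [h, shift1 E hE q hq hper]
      exact_mod_cast ih
  | pred k ih =>
      have h : x + (-(k : ℤ) : ℤ) * q = (x + (-(k : ℤ) - 1 : ℤ) * q) + q := by push_cast; ring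
      rw [h, shift1 E hE q hq hper] at ih
      exact_mod_cast ih

lemma indep (a b : ℝ) :
    volume (E ∩ Set.Ico b (b + q)) = volume (E ∩ Set.Ico a (a + q)) := by
  -- reduce to a ≤ b < a + q
  set n : ℤ := ⌊(b - a) / q⌋ with hn
  set b0 : ℝ := b - n * q with hb0
  have hab : a ≤ b0 ∧ b0 < a + q := by
    constructor
    · have := Int.floor_le ((b - a) / q)
      rw [hb0]
      have : (n : ℝ) * q ≤ b - a := by
        calc (n : ℝ) * q ≤ ((b - a)/q) * q := by
              apply mul_le_mul_of_nonneg_right (Int.floor_le _) hq.le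
          _ = b - a := div_mul_cancel₀ _ hq.ne'
      linarith
    · have := Int.lt_floor_add_one ((b - a) / q)
      have : b - a < (n + 1 : ℝ) * q := by
        have h2 : (b - a)/q < n + 1 := Int.lt_floor_add_one _
        calc b - a = ((b - a)/q) * q := (div_mul_cancel₀ _ hq.ne').symm
          _ < (n + 1 : ℝ) * q := by exact mul_lt_mul_of_pos_right h2 hq
      rw [hb0]; push_cast; linarith
  obtain ⟨h1, h2⟩ := hab
  have hb : b = b0 + n * q := by rw [hb0]; ring
  have e1 : volume (E ∩ Set.Ico b (b + q)) = volume (E ∩ Set.Ico b0 (b0 + q)) := by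
    rw [hb]; exact shiftZ E hE q hq hper b0 n
  rw [e1]
  -- now a ≤ b0 < a + q
  have split1 : E ∩ Set.Ico b0 (b0 + q)
      = (E ∩ Set.Ico b0 (a + q)) ∪ (E ∩ Set.Ico (a + q) (b0 + q)) := by
    rw [← Set.inter_union_distrib_left, Set.Ico_union_Ico_eq_Ico (by linarith) (by linarith)]
  have split2 : E ∩ Set.Ico a (a + q)
      = (E ∩ Set.Ico a b0) ∪ (E ∩ Set.Ico b0 (a + q)) := by
    rw [← Set.inter_union_distrib_left, Set.Ico_union_Ico_eq_Ico (by linarith) (by linarith)]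
  have htr : volume (E ∩ Set.Ico (a + q) (b0 + q)) = volume (E ∩ Set.Ico a b0) := by
    have hpre : (fun y : ℝ => y + q) ⁻¹' (E ∩ Set.Ico (a + q) (b0 + q))
        = E ∩ Set.Ico a b0 := by
      ext y
      simp only [Set.mem_preimage, Set.mem_inter_iff, Set.mem_Ico]
      constructor
      · rintro ⟨hy, u1, u2⟩; exact ⟨(hper y).2 hy, by linarith, by linarith⟩
      · rintro ⟨hy, u1, u2⟩; exact ⟨(hper y).1 hy, by linarith, by linarith⟩
    rw [← hpre, measure_preimage_add_right]
  have d1 : Disjoint (E ∩ Set.Ico b0 (a + q)) (E ∩ Set.Ico (a + q) (b0 + q)) :=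
    (Set.Ico_disjoint_Ico_same).mono inter_subset_right inter_subset_right
  have d2 : Disjoint (E ∩ Set.Ico a b0) (E ∩ Set.Ico b0 (a + q)) :=
    (Set.Ico_disjoint_Ico_same).mono inter_subset_right inter_subset_right
  rw [split1, split2,
    measure_union d1 (hE.inter measurableSet_Ico),
    measure_union d2 (hE.inter measurableSet_Ico), htr, add_comm]

lemma count (a : ℝ) : ∀ n : ℕ,
    volume (E ∩ Set.Ico a (a + n * q)) = n * volume (E ∩ Set.Ico a (a + q)) := by
  intro n
  induction n with
  | zero => simp
  | succ k ih =>
      have hsplit : E ∩ Set.Ico a (a + (k + 1 : ℕ) * q)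
          = (E ∩ Set.Ico a (a + k * q)) ∪ (E ∩ Set.Ico (a + k * q) (a + (k + 1 : ℕ) * q)) := by
        rw [← Set.inter_union_distrib_left, Set.Ico_union_Ico_eq_Ico]
        · nlinarith [hq.le]
        · push_cast; nlinarith [hq.le]
      have d : Disjoint (E ∩ Set.Ico a (a + k * q)) (E ∩ Set.Ico (a + k * q) (a + (k + 1 : ℕ) * q)) :=
        (Set.Ico_disjoint_Ico_same).mono inter_subset_right inter_subset_right
      have e2 : volume (E ∩ Set.Ico (a + k * q) (a + (k + 1 : ℕ) * q))
          = volume (E ∩ Set.Ico a (a + q)) := by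
        have : a + ((k : ℕ) + 1 : ℕ) * q = (a + k * q) + q := by push_cast; ring
        rw [this]
        exact indep E hE q hq hper a (a + k * q)
      rw [hsplit, measure_union d (hE.inter measurableSet_Ico), ih, e2]
      push_cast; ring_nf

end Aux

/-- A `q`-periodic Lebesgue measurable set has asymptotic density
`λ(E ∩ [a, a+q])/q` for every `a`. -/
theorem periodic_set_density (E : Set ℝ) (hE : MeasurableSet E) (q : ℝ) (hq : 0 < q)
    (hper : ∀ x : ℝ, x ∈ E ↔ x + q ∈ E) (a : ℝ) :
    Tendsto (fun t : ℝ => (volume (E ∩ Set.Icc (-t) t)).toReal / (2 * t)) atTop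
      (𝓝 ((volume (E ∩ Set.Icc a (a + q))).toReal / q)) := by
  set c : ℝ≥0∞ := volume (E ∩ Set.Ico a (a + q)) with hc
  have hcfin : c ≠ ⊤ := by
    refine ne_top_of_le_ne_top ?_ (measure_mono inter_subset_right)
    simp [Real.volume_Ico]
  have hIcc : volume (E ∩ Set.Icc a (a + q)) = c := by
    have hsplit : E ∩ Set.Icc a (a + q) = (E ∩ Set.Ico a (a + q)) ∪ (E ∩ {a + q}) := by
      rw [← Set.inter_union_distrib_left, Set.Ico_union_right (by linarith)]
    rw [hsplit]
    refine le_antisymm ((measure_union_le _ _).trans ?_) (measure_mono subset_union_left)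
    have h0 : volume (E ∩ ({a + q} : Set ℝ)) = 0 :=
      measure_mono_null inter_subset_right (by simp)
    simp [h0]
    exact le_rfl
  rw [hIcc]
  -- bounding functions
  set g : ℝ → ℝ := fun t => (⌊2 * t / q⌋₊ : ℝ) * c.toReal / (2 * t) with hg
  set h : ℝ → ℝ := fun t => ((⌊2 * t / q⌋₊ : ℝ) + 1) * c.toReal / (2 * t) with hh
  have hfrac : Tendsto (fun t : ℝ => (⌊2 * t / q⌋₊ : ℝ) / (2 * t / q)) atTop (𝓝 1) := by
    refine tendsto_nat_floor_div_atTop.comp ?_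
    exact (tendsto_id.const_mul_atTop (by norm_num : (0:ℝ) < 2)).atTop_div_const hq
  have hglim : Tendsto g atTop (𝓝 (c.toReal / q)) := by
    have := hfrac.mul_const (c.toReal / q)
    rw [one_mul] at this
    refine this.congr' ?_
    filter_upwards [eventually_gt_atTop 0] with t ht
    rw [hg]
    field_simp
  have hsmall : Tendsto (fun t : ℝ => c.toReal / (2 * t)) atTop (𝓝 0) := by
    exact tendsto_const_nhds.div_atTop (tendsto_id.const_mul_atTop (by norm_num : (0:ℝ) < 2))
  have hhlim : Tendsto h atTop (𝓝 (c.toReal / q)) := by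
    have := hglim.add hsmall
    rw [add_zero] at this
    refine this.congr ?_
    intro t
    rw [hg, hh]
    ring
  refine tendsto_of_tendsto_of_tendsto_of_le_of_le' hglim hhlim ?_ ?_ <;>
    · filter_upwards [eventually_gt_atTop 0] with t ht
      set n : ℕ := ⌊2 * t / q⌋₊ with hn
      have h2t : (0:ℝ) < 2 * t := by linarith
      have hnle : (n : ℝ) * q ≤ 2 * t := by
        have h1 : (n : ℝ) ≤ 2 * t / q := Nat.floor_le (by positivity)
        calc (n : ℝ) * q ≤ (2 * t / q) * q := by nlinarith
          _ = 2 * t := div_mul_cancel₀ _ hq.ne'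
      have hlt : 2 * t < ((n : ℝ) + 1) * q := by
        have h1 : 2 * t / q < (n : ℝ) + 1 := Nat.lt_floor_add_one _
        calc 2 * t = (2 * t / q) * q := (div_mul_cancel₀ _ hq.ne').symm
          _ < ((n : ℝ) + 1) * q := by nlinarith
      have hlow : (n : ℝ≥0∞) * c ≤ volume (E ∩ Set.Icc (-t) t) := by
        calc (n : ℝ≥0∞) * c = volume (E ∩ Set.Ico (-t) (-t + (n : ℕ) * q)) := by
              rw [count E hE q hq hper (-t) n, indep E hE q hq hper a (-t)]
          _ ≤ _ := by
              refine measure_mono (inter_subset_inter_right _ ?_)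
              intro y hy
              exact ⟨hy.1, by have := hy.2; linarith⟩
      have hup : volume (E ∩ Set.Icc (-t) t) ≤ ((n + 1 : ℕ) : ℝ≥0∞) * c := by
        calc volume (E ∩ Set.Icc (-t) t)
            ≤ volume (E ∩ Set.Ico (-t) (-t + ((n + 1 : ℕ) : ℝ) * q)) := by
              refine measure_mono (inter_subset_inter_right _ ?_)
              intro y hy
              refine ⟨hy.1, ?_⟩
              have := hy.2
              push_cast
              linarith
          _ = ((n + 1 : ℕ) : ℝ≥0∞) * c := by
              rw [count E hE q hq hper (-t) (n + 1), indep E hE q hq hper a (-t)]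
      have hfin1 : ((n + 1 : ℕ) : ℝ≥0∞) * c ≠ ⊤ := by
        exact ENNReal.mul_ne_top (by simp) hcfin
      have hVfin : volume (E ∩ Set.Icc (-t) t) ≠ ⊤ := ne_top_of_le_ne_top hfin1 hup
      first
      | -- lower bound : g t ≤ f t
        calc g t = ((n : ℝ≥0∞) * c).toReal / (2 * t) := by
              rw [hg]; simp [ENNReal.toReal_mul, hn]
          _ ≤ (volume (E ∩ Set.Icc (-t) t)).toReal / (2 * t) :=
              (div_le_div_iff_of_pos_right h2t).mpr (ENNReal.toReal_mono hVfin hlow)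
      | -- upper bound : f t ≤ h t
        calc (volume (E ∩ Set.Icc (-t) t)).toReal / (2 * t)
            ≤ (((n + 1 : ℕ) : ℝ≥0∞) * c).toReal / (2 * t) :=
              (div_le_div_iff_of_pos_right h2t).mpr (ENNReal.toReal_mono hfin1 hup)
          _ = h t := by
              rw [hh]; simp only [ENNReal.toReal_mul, ENNReal.toReal_natCast]; push_cast; ring
end
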